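/- arXiv:1207.0149 — 2 statements merged into one kernel-verified Lean document; each statement's English description precedes it below -/
import Mathlib

section
/- Fix k ≥ 1 and a real constant c, and set p = p(n) = (((k/2+1)·log n + (k/2)·log log n + c)/n)^(1/(k+1)). Then as n → ∞, the expected number of maximal (k+1)-cliques in G(n,p), namely C(n,k+1) · p^(C(k+1,2)) · (1-p^(k+1))^(n-k-1), converges to ((k/2+1)^(k/2)/(k+1)!) · e^(-c). -/
open Finset Filter Topology

/-- The set of potential edges on `Fin n`: non-diagonal elements of `Sym2 (Fin n)`. -/
abbrev PotEdge (n : ℕ) := {s : Sym2 (Fin n) // ¬ s.IsDiag}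

/-- A graph on `[n]` is identified with its edge set. -/
abbrev EdgeSet (n : ℕ) := Finset (PotEdge n)

/-- The `G(n,p)` weight of a fixed graph with edge set `E`:
each of the `C(n,2)` potential edges is present independently with probability `p`. -/
noncomputable def edgeWeight (n : ℕ) (p : ℝ) (E : EdgeSet n) : ℝ :=
  p ^ E.card * (1 - p) ^ (Fintype.card (PotEdge n) - E.card)

open scoped Classical in
/-- Probability of an event `A` under the Erdős–Rényi measure `G(n,p)`. -/
noncomputable def Pr (n : ℕ) (p : ℝ) (A : EdgeSet n → Prop) : ℝ :=
  ∑ E ∈ Finset.univ.filter A, edgeWeight n p E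

/-- Adjacency of `u` and `v` in the graph with edge set `E`. -/
def Adj {n : ℕ} (E : EdgeSet n) (u v : Fin n) : Prop :=
  ∃ e ∈ E, (e : Sym2 (Fin n)) = s(u, v)

/-- `S` spans a clique of the graph with edge set `E`. -/
def IsClique {n : ℕ} (E : EdgeSet n) (S : Finset (Fin n)) : Prop :=
  ∀ u ∈ S, ∀ v ∈ S, u ≠ v → Adj E u v

/-- `S` spans a maximal clique: a clique with no common neighbor outside `S`. -/
def IsMaxClique {n : ℕ} (E : EdgeSet n) (S : Finset (Fin n)) : Prop :=
  IsClique E S ∧ ¬ ∃ w : Fin n, w ∉ S ∧ ∀ u ∈ S, Adj E w u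

open scoped Classical in
/-- The number of maximal `j`-cliques in the graph with edge set `E`. -/
noncomputable def numMaxCliques {n : ℕ} (E : EdgeSet n) (j : ℕ) : ℕ :=
  (Finset.univ.filter (fun S : Finset (Fin n) => S.card = j ∧ IsMaxClique E S)).card

open scoped Classical in
/-- The number of `j`-cliques in the graph with edge set `E`. -/
noncomputable def numCliques {n : ℕ} (E : EdgeSet n) (j : ℕ) : ℕ :=
  (Finset.univ.filter (fun S : Finset (Fin n) => S.card = j ∧ IsClique E S)).card

open scoped Classical in
/-- The number of common neighbors of `S` (the number of vertices of the link of `S`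
in the flag complex). -/
noncomputable def linkCard {n : ℕ} (E : EdgeSet n) (S : Finset (Fin n)) : ℕ :=
  (Finset.univ.filter (fun v : Fin n => v ∉ S ∧ ∀ u ∈ S, Adj E v u)).card

noncomputable def auxL (k : ℕ) (c : ℝ) (n : ℕ) : ℝ :=
  ((k:ℝ)/2+1)*Real.log n + ((k:ℝ)/2)*Real.log (Real.log n) + c

lemma auxA (k : ℕ) : Tendsto (fun n : ℕ => ((n.choose (k+1) * (k+1).factorial : ℕ) : ℝ) / (n:ℝ)^(k+1)) atTop (𝓝 1) := by
  have hlim : Tendsto (fun n : ℕ => ∏ i ∈ range (k+1), (1 - (i:ℝ)/n)) atTop (𝓝 1) := by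
    have h := tendsto_finset_prod (range (k+1))
      (f := fun (i : ℕ) (n : ℕ) => 1 - (i:ℝ)/n) (x := atTop) (a := fun _ => (1:ℝ)) ?_
    · simpa using h
    · intro i _
      simpa using (tendsto_const_nhds (x := (1:ℝ))).sub
        (tendsto_const_div_atTop_nhds_zero_nat (i:ℝ))
  refine hlim.congr' ?_
  filter_upwards [eventually_ge_atTop (k+1)] with n hn
  have hn0 : (0:ℝ) < n := by
    have : 0 < n := by omega
    exact_mod_cast this
  have h1 : n.choose (k+1) * (k+1).factorial = n.descFactorial (k+1) := by
    rw [Nat.descFactorial_eq_factorial_mul_choose]; ring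
  rw [h1, Nat.descFactorial_eq_prod_range, Nat.cast_prod]
  rw [eq_div_iff (by positivity),
    show ((n:ℝ)^(k+1)) = ∏ _i ∈ range (k+1), (n:ℝ) by simp, ← Finset.prod_mul_distrib]
  refine Finset.prod_congr rfl fun i hi => ?_
  have hiln : i ≤ n := by simp at hi; omega
  rw [Nat.cast_sub hiln]
  field_simp

lemma hlog_atTop : Tendsto (fun n : ℕ => Real.log n) atTop atTop :=
  Real.tendsto_log_atTop.comp tendsto_natCast_atTop_atTop

lemma h_ll : Tendsto (fun n : ℕ => Real.log (Real.log n) / Real.log n) atTop (𝓝 0) := by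
  have h := (Real.tendsto_pow_log_div_mul_add_atTop 1 0 1 one_ne_zero).comp hlog_atTop
  simpa [Function.comp_def] using h

lemma h_clog (c : ℝ) : Tendsto (fun n : ℕ => c / Real.log n) atTop (𝓝 0) :=
  tendsto_const_nhds.div_atTop hlog_atTop

lemma hpow_div (m : ℕ) : Tendsto (fun n : ℕ => (Real.log n)^m / n) atTop (𝓝 0) := by
  have h := (Real.tendsto_pow_log_div_mul_add_atTop 1 0 m one_ne_zero).comp
    (tendsto_natCast_atTop_atTop (R := ℝ))
  simpa [Function.comp_def] using h

lemma hLlog (k : ℕ) (c : ℝ) :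
    Tendsto (fun n : ℕ => auxL k c n / Real.log n) atTop (𝓝 ((k:ℝ)/2+1)) := by
  have h : Tendsto (fun n : ℕ => ((k:ℝ)/2+1) + ((k:ℝ)/2)*(Real.log (Real.log n)/Real.log n)
      + c / Real.log n) atTop (𝓝 (((k:ℝ)/2+1) + ((k:ℝ)/2)*0 + 0)) :=
    ((tendsto_const_nhds.add (tendsto_const_nhds.mul h_ll)).add (h_clog c))
  rw [show ((k:ℝ)/2+1) + ((k:ℝ)/2)*0 + 0 = (k:ℝ)/2+1 by ring] at h
  refine h.congr' ?_
  filter_upwards [hlog_atTop.eventually_gt_atTop 0] with n hl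
  simp only [auxL]
  field_simp

lemma hL_atTop (k : ℕ) (c : ℝ) : Tendsto (fun n : ℕ => auxL k c n) atTop atTop := by
  have h := (hLlog k c).pos_mul_atTop (by positivity) hlog_atTop
  refine h.congr' ?_
  filter_upwards [hlog_atTop.eventually_gt_atTop 0] with n hl
  field_simp

lemma hT (k : ℕ) (c : ℝ) : Tendsto (fun n : ℕ => auxL k c n / n) atTop (𝓝 0) := by
  have h := (hLlog k c).mul (hpow_div 1)
  rw [mul_zero] at h
  refine h.congr' ?_
  filter_upwards [hlog_atTop.eventually_gt_atTop 0] with n hl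
  rw [pow_one]
  field_simp

lemma hL2 (k : ℕ) (c : ℝ) : Tendsto (fun n : ℕ => (auxL k c n)^2 / n) atTop (𝓝 0) := by
  have h := (((hLlog k c).mul (hLlog k c))).mul (hpow_div 2)
  rw [mul_zero] at h
  refine h.congr' ?_
  filter_upwards [hlog_atTop.eventually_gt_atTop 0, eventually_gt_atTop 0] with n hl hn
  have hn' : (0:ℝ) < n := by exact_mod_cast hn
  rw [div_mul_div_comm, div_mul_div_comm, div_eq_div_iff (by positivity) (by positivity)]
  ring

lemma auxLog {t : ℝ} (h1 : t ≤ 1/2) :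
    -(2*t^2) ≤ Real.log (1-t) + t ∧ Real.log (1-t) + t ≤ 0 := by
  have h1t : (0:ℝ) < 1 - t := by linarith
  constructor
  · have hinv : Real.log (1-t)⁻¹ ≤ (1-t)⁻¹ - 1 :=
      Real.log_le_sub_one_of_pos (by positivity)
    rw [Real.log_inv] at hinv
    have h2 : (1-t)⁻¹ - 1 = t / (1-t) := by field_simp; ring
    have h3 : t / (1-t) ≤ t + 2*t^2 := by
      rw [div_le_iff₀ h1t]; nlinarith
    nlinarith
  · have := Real.log_le_sub_one_of_pos h1t
    linarith

lemma hX (k : ℕ) (c : ℝ) :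
    Tendsto (fun n : ℕ => ((n - k - 1 : ℕ):ℝ) * Real.log (1 - auxL k c n / n) + auxL k c n)
      atTop (𝓝 0) := by
  have hg : Tendsto (fun n : ℕ => (n:ℝ) * (Real.log (1 - auxL k c n / n) + auxL k c n / n))
      atTop (𝓝 0) := by
    have hlow : Tendsto (fun n : ℕ => -(2 * ((auxL k c n)^2 / n))) atTop (𝓝 0) := by
      have := ((hL2 k c).const_mul 2).neg
      simpa using this
    refine tendsto_of_tendsto_of_tendsto_of_le_of_le' hlow tendsto_const_nhds ?_ ?_
    · filter_upwards [(hL_atTop k c).eventually_ge_atTop 0,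
        (hT k c).eventually_le_const (by norm_num : (0:ℝ) < 1/2),
        eventually_gt_atTop 0] with n hL ht2 hn
      have hn' : (0:ℝ) < n := by exact_mod_cast hn
      have h := (auxLog ht2).1
      have h2 : (n:ℝ) * -(2 * (auxL k c n / n)^2) ≤ (n:ℝ) * (Real.log (1 - auxL k c n / n) + auxL k c n / n) :=
        mul_le_mul_of_nonneg_left h hn'.le
      refine le_trans (le_of_eq ?_) h2
      field_simp
    · filter_upwards [(hL_atTop k c).eventually_ge_atTop 0,
        (hT k c).eventually_le_const (by norm_num : (0:ℝ) < 1/2),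
        eventually_gt_atTop 0] with n hL ht2 hn
      have hn' : (0:ℝ) < n := by exact_mod_cast hn
      have h := (auxLog ht2).2
      nlinarith [mul_le_mul_of_nonneg_left h hn'.le]
  have hh : Tendsto (fun n : ℕ => ((k:ℝ)+1) * Real.log (1 - auxL k c n / n)) atTop (𝓝 0) := by
    have h1 : Tendsto (fun n : ℕ => 1 - auxL k c n / n) atTop (𝓝 1) := by
      have := tendsto_const_nhds (x := (1:ℝ)) (f := atTop (α := ℕ)) |>.sub (hT k c)
      simpa using this
    have h2 := (Real.continuousAt_log one_ne_zero).tendsto.comp h1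
    rw [Real.log_one] at h2
    have := h2.const_mul ((k:ℝ)+1)
    simpa using this
  have hres := hg.sub hh
  rw [sub_zero] at hres
  refine hres.congr' ?_
  filter_upwards [(hL_atTop k c).eventually_ge_atTop 0, eventually_ge_atTop (k+1)] with n hL hn
  have hn' : (0:ℝ) < n := by
    have : 0 < n := by omega
    exact_mod_cast this
  have hcast : ((n - k - 1 : ℕ):ℝ) = (n:ℝ) - (k:ℝ) - 1 := by
    have : n - k - 1 = n - (k+1) := by omega
    rw [this, Nat.cast_sub hn]
    push_cast; ring
  rw [hcast]
  field_simp
  ring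

/-- For `p = (((k/2+1) log n + (k/2) log log n + c)/n)^(1/(k+1))`, the
expected number of maximal `(k+1)`-cliques in `G(n,p)` converges to
`(k/2+1)^(k/2)/(k+1)! * e^(-c)` as `n → ∞`. -/
theorem stmt2 (k : ℕ) (hk : 1 ≤ k) (c : ℝ) (p : ℕ → ℝ)
    (hp : ∀ n : ℕ, p n =
      ((((k : ℝ) / 2 + 1) * Real.log n + ((k : ℝ) / 2) * Real.log (Real.log n) + c) / n)
        ^ ((1 : ℝ) / (k + 1))) :
    Tendsto (fun n : ℕ =>
        (n.choose (k + 1) : ℝ) * p n ^ ((k + 1).choose 2) * (1 - p n ^ (k + 1)) ^ (n - k - 1))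
      atTop
      (𝓝 (((k : ℝ) / 2 + 1) ^ ((k : ℝ) / 2) / ((k + 1).factorial : ℝ) * Real.exp (-c))) := by
  have hk2 : (0:ℝ) < (k:ℝ)/2 + 1 := by positivity
  have hfact : (0:ℝ) < ((k+1).factorial : ℝ) := by
    exact_mod_cast (k+1).factorial_pos
  set S : ℕ → ℝ := fun n =>
    Real.log (((n.choose (k+1) * (k+1).factorial : ℕ):ℝ) / (n:ℝ)^(k+1))
    - Real.log ((k+1).factorial : ℝ)
    + ((k:ℝ)/2) * Real.log (auxL k c n / Real.log n)
    + (((n - k - 1 : ℕ):ℝ) * Real.log (1 - auxL k c n / n) + auxL k c n)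
    - c with hSdef
  have hS : Tendsto S atTop
      (𝓝 (0 - Real.log ((k+1).factorial : ℝ) + ((k:ℝ)/2) * Real.log ((k:ℝ)/2+1) + 0 - c)) := by
    have p1 : Tendsto (fun n : ℕ =>
        Real.log (((n.choose (k+1) * (k+1).factorial : ℕ):ℝ) / (n:ℝ)^(k+1))) atTop (𝓝 0) := by
      have := (Real.continuousAt_log one_ne_zero).tendsto.comp (auxA k)
      simpa [Function.comp_def] using this
    have p3 : Tendsto (fun n : ℕ => ((k:ℝ)/2) * Real.log (auxL k c n / Real.log n)) atTop
        (𝓝 (((k:ℝ)/2) * Real.log ((k:ℝ)/2+1))) := by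
      exact (((Real.continuousAt_log hk2.ne').tendsto.comp (hLlog k c)).const_mul _)
    exact (((p1.sub_const _).add p3).add (hX k c)).sub_const c
  have hexp := (Real.continuous_exp.tendsto _).comp hS
  have hval : Real.exp (0 - Real.log ((k+1).factorial : ℝ) + ((k:ℝ)/2) * Real.log ((k:ℝ)/2+1) + 0 - c)
      = ((k : ℝ) / 2 + 1) ^ ((k : ℝ) / 2) / ((k + 1).factorial : ℝ) * Real.exp (-c) := by
    rw [Real.rpow_def_of_pos hk2,
      show 0 - Real.log ((k+1).factorial : ℝ) + ((k:ℝ)/2) * Real.log ((k:ℝ)/2+1) + 0 - c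
        = Real.log ((k:ℝ)/2+1) * ((k:ℝ)/2) + (- Real.log ((k+1).factorial : ℝ)) + (-c) by ring,
      Real.exp_add, Real.exp_add, Real.exp_neg, Real.exp_log hfact]
    ring
  rw [hval] at hexp
  refine hexp.congr' ?_
  filter_upwards [hlog_atTop.eventually_gt_atTop 0, (hL_atTop k c).eventually_gt_atTop 0,
    (hT k c).eventually_le_const (by norm_num : (0:ℝ) < 1/2), eventually_ge_atTop (k+1)]
    with n hlogpos hLpos ht2 hnk
  have hn0 : (0:ℝ) < n := by
    have : 0 < n := by omega
    exact_mod_cast this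
  have hch : 0 < n.choose (k+1) := Nat.choose_pos hnk
  have hch' : (0:ℝ) < (n.choose (k+1) : ℝ) := by exact_mod_cast hch
  have h1t : (0:ℝ) < 1 - auxL k c n / n := by
    have : auxL k c n / n ≤ 1/2 := ht2
    linarith
  have htpos : (0:ℝ) < auxL k c n / n := div_pos hLpos hn0
  -- p-power identities
  have hbase : ((((k : ℝ) / 2 + 1) * Real.log n + ((k : ℝ) / 2) * Real.log (Real.log n) + c) / n)
      = auxL k c n / n := rfl
  have hp1 : p n ^ (k+1) = auxL k c n / n := by
    rw [hp n, hbase, ← Real.rpow_natCast _ (k+1), ← Real.rpow_mul htpos.le,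
      show (1:ℝ)/((k:ℝ)+1) * (((k+1:ℕ)):ℝ) = 1 by push_cast; field_simp, Real.rpow_one]
  have hc2 : ((((k+1).choose 2 : ℕ)):ℝ) * 2 = ((k:ℝ)+1) * k := by
    have h : (k+1).choose 2 * 2 = (k+1) * k := by
      rw [Nat.choose_two_right]
      simp only [Nat.add_sub_cancel]
      exact Nat.div_mul_cancel
        (even_iff_two_dvd.mp (by simpa [mul_comm] using Nat.even_mul_succ_self k))
    exact_mod_cast h
  have hp2 : p n ^ ((k+1).choose 2)
      = Real.exp (Real.log (auxL k c n / n) * ((k:ℝ)/2)) := by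
    rw [hp n, hbase, ← Real.rpow_natCast _ ((k+1).choose 2), ← Real.rpow_mul htpos.le,
      show (1:ℝ)/((k:ℝ)+1) * ((((k+1).choose 2 : ℕ)):ℝ) = (k:ℝ)/2 by
        have hkk : ((k:ℝ)+1) ≠ 0 := by positivity
        field_simp
        linarith [hc2],
      Real.rpow_def_of_pos htpos]
  -- rewrite S n
  have hlogA : Real.log (((n.choose (k+1) * (k+1).factorial : ℕ):ℝ) / (n:ℝ)^(k+1))
      = Real.log (n.choose (k+1) : ℝ) + Real.log ((k+1).factorial : ℝ)
        - ((k:ℝ)+1) * Real.log n := by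
    push_cast
    rw [Real.log_div (by positivity) (by positivity),
      Real.log_mul (by positivity) (by positivity), Real.log_pow]
    push_cast; ring
  have hlogd1 : Real.log (auxL k c n / Real.log n)
      = Real.log (auxL k c n) - Real.log (Real.log n) := Real.log_div hLpos.ne' hlogpos.ne'
  have hlogd2 : Real.log (auxL k c n / n)
      = Real.log (auxL k c n) - Real.log n := Real.log_div hLpos.ne' hn0.ne'
  have hSn : S n = Real.log (n.choose (k+1) : ℝ)
      + Real.log (auxL k c n / n) * ((k:ℝ)/2)
      + ((n - k - 1 : ℕ):ℝ) * Real.log (1 - auxL k c n / n) := by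
    rw [hSdef]
    simp only [hlogA, hlogd1, hlogd2]
    show _ - _ + _ + (_ + auxL k c n) - c = _
    rw [show auxL k c n = ((k:ℝ)/2+1)*Real.log n + ((k:ℝ)/2)*Real.log (Real.log n) + c from rfl]
    ring
  show (Real.exp ∘ S) n
      = (n.choose (k + 1) : ℝ) * p n ^ ((k + 1).choose 2) * (1 - p n ^ (k + 1)) ^ (n - k - 1)
  simp only [Function.comp_apply]
  rw [hSn, Real.exp_add, Real.exp_add, Real.exp_log hch', hp1, hp2,
    Real.exp_nat_mul, Real.exp_log h1t]
end

section
/- Fix k ≥ 1. If p = p(n) satisfies p ≥ (((k/2+1)·log n + (k/2)·log log n + ω(n))/n)^(1/(k+1)) for some function ω(n) → ∞, then the probability that G(n,p) contains a maximal (k+1)-clique tends to 0 as n → ∞. -/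
open Finset Filter Topology

open Finset
open scoped Classical

variable {X : Type*} [DecidableEq X]

noncomputable def mass (p : ℝ) (A : Finset X) (P : Finset X → Prop) : ℝ :=
  ∑ s ∈ A.powerset, if P s then p ^ s.card * (1 - p) ^ (A.card - s.card) else 0

lemma mass_congr (p : ℝ) (A : Finset X) {P Q : Finset X → Prop}
    (h : ∀ s ⊆ A, (P s ↔ Q s)) : mass p A P = mass p A Q := by
  unfold mass
  apply Finset.sum_congr rfl
  intro s hs
  have := h s (Finset.mem_powerset.1 hs)
  split_ifs <;> tauto

lemma mass_true (p : ℝ) (A : Finset X) : mass p A (fun _ => True) = 1 := by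
  unfold mass
  simp only [if_true]
  have h := Finset.prod_add (fun _ : X => p) (fun _ : X => (1 : ℝ) - p) A
  simp only [Finset.prod_const] at h
  have h2 : ∀ s ∈ A.powerset, p ^ s.card * (1 - p) ^ (A.card - s.card)
      = p ^ s.card * (1 - p) ^ (A \ s).card := by
    intro s hs
    rw [Finset.card_sdiff_of_subset (Finset.mem_powerset.1 hs)]
  rw [Finset.sum_congr rfl h2, ← h]
  simp

lemma mass_full (p : ℝ) (B : Finset X) : mass p B (fun s => s = B) = p ^ B.card := by
  unfold mass
  rw [Finset.sum_eq_single_of_mem B (by simp)]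
  · simp
  · intro s hs hne; simp [hne]

lemma mass_ne (p : ℝ) (B : Finset X) : mass p B (fun s => s ≠ B) = 1 - p ^ B.card := by
  have key : mass p B (fun s => s ≠ B) = mass p B (fun _ => True) - mass p B (fun s => s = B) := by
    unfold mass
    rw [← Finset.sum_sub_distrib]
    apply Finset.sum_congr rfl
    intro s _
    by_cases h : s = B <;> simp [h]
  rw [key, mass_true, mass_full]

lemma mass_split (p : ℝ) {A B : Finset X} (hB : B ⊆ A) (P Q : Finset X → Prop) :
    mass p A (fun E => P (E ∩ B) ∧ Q (E ∩ (A \ B))) = mass p B P * mass p (A \ B) Q := by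
  unfold mass
  rw [Finset.sum_mul_sum, ← Finset.sum_product']
  apply Finset.sum_nbij' (i := fun E => (E ∩ B, E ∩ (A \ B))) (j := fun st => st.1 ∪ st.2)
  · intro E hE
    simp [Finset.mem_product, Finset.inter_subset_right]
  · intro st hst
    rw [Finset.mem_product] at hst
    rw [Finset.mem_powerset]
    exact Finset.union_subset ((Finset.mem_powerset.1 hst.1).trans hB)
      ((Finset.mem_powerset.1 hst.2).trans (Finset.sdiff_subset))
  · intro E hE
    rw [Finset.mem_powerset] at hE
    simp only
    rw [← Finset.inter_union_distrib_left, Finset.union_sdiff_of_subset hB,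
      Finset.inter_eq_left.2 hE]
  · intro st hst
    rw [Finset.mem_product, Finset.mem_powerset, Finset.mem_powerset] at hst
    obtain ⟨h1, h2⟩ := hst
    have hd : Disjoint st.2 B := Finset.disjoint_of_subset_left h2 Finset.sdiff_disjoint
    have hd2 : Disjoint st.1 (A \ B) :=
      Finset.disjoint_of_subset_left h1 (Finset.disjoint_sdiff)
    have e1 : (st.1 ∪ st.2) ∩ B = st.1 := by
      rw [Finset.union_inter_distrib_right, Finset.inter_eq_left.2 h1,
        (Finset.disjoint_iff_inter_eq_empty.1 hd), Finset.union_empty]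
    have e2 : (st.1 ∪ st.2) ∩ (A \ B) = st.2 := by
      rw [Finset.union_inter_distrib_right, Finset.inter_eq_left.2 h2,
        (Finset.disjoint_iff_inter_eq_empty.1 hd2), Finset.empty_union]
    simp only [e1, e2]
  · intro E hE
    rw [Finset.mem_powerset] at hE
    simp only
    by_cases h : P (E ∩ B) ∧ Q (E ∩ (A \ B))
    · rw [if_pos h, if_pos h.1, if_pos h.2]
      have hdisj : Disjoint (E ∩ B) (E ∩ (A \ B)) :=
        Finset.disjoint_of_subset_left Finset.inter_subset_right
          (Finset.disjoint_of_subset_right Finset.inter_subset_right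
            (Finset.disjoint_sdiff))
      have hcard : (E ∩ B).card + (E ∩ (A \ B)).card = E.card := by
        rw [← Finset.card_union_of_disjoint hdisj, ← Finset.inter_union_distrib_left,
          Finset.union_sdiff_of_subset hB, Finset.inter_eq_left.2 hE]
      have hA : B.card + (A \ B).card = A.card := by
        rw [Finset.card_sdiff_of_subset hB]
        have := Finset.card_le_card hB
        omega
      have hsb : (E ∩ B).card ≤ B.card := Finset.card_le_card Finset.inter_subset_right
      have hst : (E ∩ (A \ B)).card ≤ (A \ B).card :=
        Finset.card_le_card Finset.inter_subset_right
      have hexp : A.card - E.card = (B.card - (E ∩ B).card) + ((A \ B).card - (E ∩ (A \ B)).card) := by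
        omega
      rw [← hcard]
      have hexp2 : A.card - (#(E ∩ B) + #(E ∩ (A \ B))) = (B.card - (E ∩ B).card) + ((A \ B).card - (E ∩ (A \ B)).card) := by omega
      rw [hexp2, pow_add, pow_add]
      ring
    · rw [if_neg h]
      rcases not_and_or.1 h with h1 | h1
      · rw [if_neg h1, zero_mul]
      · rw [if_neg h1, mul_zero]

lemma mass_prod (p : ℝ) {I : Type*} (B : I → Finset X) (P : I → Finset X → Prop)
    (ι : Finset I) :
    ∀ (A : Finset X), (∀ i ∈ ι, B i ⊆ A) →
    (∀ i ∈ ι, ∀ j ∈ ι, i ≠ j → Disjoint (B i) (B j)) →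
    mass p A (fun E => ∀ i ∈ ι, P i (E ∩ B i))
      = ∏ i ∈ ι, mass p (B i) (fun s => P i (s ∩ B i)) := by
  classical
  induction ι using Finset.induction_on with
  | empty =>
    intro A _ _
    rw [Finset.prod_empty]
    rw [mass_congr p A (Q := fun _ => True) (by simp)]
    exact mass_true p A
  | @insert i₀ ι hi₀ ih =>
    intro A hsub hdisj
    have hB0 : B i₀ ⊆ A := hsub i₀ (Finset.mem_insert_self _ _)
    have step1 : mass p A (fun E => ∀ i ∈ insert i₀ ι, P i (E ∩ B i))
        = mass p A (fun E => (fun s => P i₀ s) (E ∩ B i₀) ∧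
            (fun t => ∀ j ∈ ι, P j (t ∩ B j)) (E ∩ (A \ B i₀))) := by
      apply mass_congr
      intro E hE
      rw [Finset.forall_mem_insert]
      simp only
      constructor
      · rintro ⟨h1, h2⟩
        refine ⟨h1, fun j hj => ?_⟩
        have hEq : E ∩ (A \ B i₀) ∩ B j = E ∩ B j := by
          have hd : Disjoint (B j) (B i₀) := hdisj j (Finset.mem_insert_of_mem hj) i₀
            (Finset.mem_insert_self _ _) (by rintro rfl; exact hi₀ hj)
          have hjA : B j ⊆ A := hsub j (Finset.mem_insert_of_mem hj)
          ext a
          simp only [Finset.mem_inter, Finset.mem_sdiff]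
          constructor
          · tauto
          · rintro ⟨ha, hb⟩
            exact ⟨⟨ha, hjA hb, fun hc => (Finset.disjoint_left.1 hd) hb hc⟩, hb⟩
        rw [hEq]
        exact h2 j hj
      · rintro ⟨h1, h2⟩
        refine ⟨h1, fun j hj => ?_⟩
        have hEq : E ∩ (A \ B i₀) ∩ B j = E ∩ B j := by
          have hd : Disjoint (B j) (B i₀) := hdisj j (Finset.mem_insert_of_mem hj) i₀
            (Finset.mem_insert_self _ _) (by rintro rfl; exact hi₀ hj)
          have hjA : B j ⊆ A := hsub j (Finset.mem_insert_of_mem hj)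
          ext a
          simp only [Finset.mem_inter, Finset.mem_sdiff]
          constructor
          · tauto
          · rintro ⟨ha, hb⟩
            exact ⟨⟨ha, hjA hb, fun hc => (Finset.disjoint_left.1 hd) hb hc⟩, hb⟩
        rw [← hEq]
        exact h2 j hj
    rw [step1, mass_split p hB0 (fun s => P i₀ s) (fun t => ∀ j ∈ ι, P j (t ∩ B j))]
    rw [Finset.prod_insert hi₀]
    congr 1
    · apply mass_congr
      intro s hs
      rw [Finset.inter_eq_left.2 hs]
    · apply ih (A \ B i₀)
      · intro j hj
        rw [Finset.subset_sdiff]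
        exact ⟨hsub j (Finset.mem_insert_of_mem hj),
          hdisj j (Finset.mem_insert_of_mem hj) i₀ (Finset.mem_insert_self _ _)
            (by rintro rfl; exact hi₀ hj)⟩
      · intro i hi j hj hij
        exact hdisj i (Finset.mem_insert_of_mem hi) j (Finset.mem_insert_of_mem hj) hij

open scoped Classical in
noncomputable def cliqueEdges (n : ℕ) (S : Finset (Fin n)) : Finset (PotEdge n) :=
  Finset.univ.filter (fun e => ∀ v ∈ (e : Sym2 (Fin n)), v ∈ S)

open scoped Classical in
noncomputable def starEdges (n : ℕ) (S : Finset (Fin n)) (w : Fin n) : Finset (PotEdge n) :=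
  Finset.univ.filter (fun e => ∃ u ∈ S, (e : Sym2 (Fin n)) = s(w, u))

open scoped Classical

lemma mem_cliqueEdges {n : ℕ} {S : Finset (Fin n)} {e : PotEdge n} :
    e ∈ cliqueEdges n S ↔ ∀ v ∈ (e : Sym2 (Fin n)), v ∈ S := by
  simp [cliqueEdges]

lemma mem_starEdges {n : ℕ} {S : Finset (Fin n)} {w : Fin n} {e : PotEdge n} :
    e ∈ starEdges n S w ↔ ∃ u ∈ S, (e : Sym2 (Fin n)) = s(w, u) := by
  simp [starEdges]

lemma isClique_iff {n : ℕ} {E : EdgeSet n} {S : Finset (Fin n)} :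
    IsClique E S ↔ cliqueEdges n S ⊆ E := by
  constructor
  · intro h e he
    rw [mem_cliqueEdges] at he
    rcases e with ⟨e, hd⟩
    induction e using Sym2.inductionOn with
    | hf a b =>
      have hab : a ≠ b := by simpa using hd
      have ha : a ∈ S := he a (by simp)
      have hb : b ∈ S := he b (by simp)
      obtain ⟨e', he'E, heq⟩ := h a ha b hb hab
      have : e' = ⟨s(a, b), hd⟩ := Subtype.ext heq
      rwa [← this]
  · intro h u hu v hv huv
    have hd : ¬ (s(u, v) : Sym2 (Fin n)).IsDiag := by simpa using huv
    refine ⟨⟨s(u, v), hd⟩, h ?_, rfl⟩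
    rw [mem_cliqueEdges]
    intro x hx
    rcases Sym2.mem_iff.1 hx with rfl | rfl <;> assumption

lemma neighbor_iff {n : ℕ} {E : EdgeSet n} {S : Finset (Fin n)} {w : Fin n} (hw : w ∉ S) :
    (∀ u ∈ S, Adj E w u) ↔ starEdges n S w ⊆ E := by
  constructor
  · intro h e he
    rw [mem_starEdges] at he
    obtain ⟨u, hu, heq⟩ := he
    obtain ⟨e', he'E, heq'⟩ := h u hu
    have : e' = e := Subtype.ext (heq'.trans heq.symm)
    rwa [← this]
  · intro h u hu
    have hne : w ≠ u := fun hwu => hw (hwu ▸ hu)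
    have hd : ¬ (s(w, u) : Sym2 (Fin n)).IsDiag := by simpa using hne
    refine ⟨⟨s(w, u), hd⟩, h ?_, rfl⟩
    rw [mem_starEdges]
    exact ⟨u, hu, rfl⟩

lemma card_starEdges {n : ℕ} {S : Finset (Fin n)} {w : Fin n} (hw : w ∉ S) :
    (starEdges n S w).card = S.card := by
  symm
  apply Finset.card_bij (fun u (hu : u ∈ S) =>
    (⟨s(w, u), by simpa using fun (hwu : w = u) => hw (hwu ▸ hu)⟩ : PotEdge n))
  · intro u hu
    rw [mem_starEdges]
    exact ⟨u, hu, rfl⟩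
  · intro u hu u' hu' heq
    have h2 : (s(w, u) : Sym2 (Fin n)) = s(w, u') := congrArg Subtype.val heq
    rw [Sym2.eq_iff] at h2
    rcases h2 with ⟨-, h⟩ | ⟨h1, h2⟩
    · exact h
    · cases h1; exact absurd hu' hw
  · intro e he
    rw [mem_starEdges] at he
    obtain ⟨u, hu, heq⟩ := he
    exact ⟨u, hu, Subtype.ext heq.symm⟩

lemma card_cliqueEdges {n : ℕ} {S : Finset (Fin n)} :
    (cliqueEdges n S).card = Nat.choose S.card 2 := by
  rw [← Sym2.card_image_offDiag]
  rw [← Finset.card_image_of_injective (cliqueEdges n S) Subtype.val_injective]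
  congr 1
  ext e
  simp only [Finset.mem_image, Finset.mem_offDiag]
  constructor
  · rintro ⟨⟨e, hd⟩, he, rfl⟩
    rw [mem_cliqueEdges] at he
    induction e using Sym2.inductionOn with
    | hf a b =>
      have hab : a ≠ b := by simpa using hd
      exact ⟨(a, b), ⟨he a (by simp), he b (by simp), hab⟩, rfl⟩
  · rintro ⟨⟨a, b⟩, ⟨ha, hb, hab⟩, rfl⟩
    refine ⟨⟨s(a, b), by simpa using hab⟩, ?_, rfl⟩
    rw [mem_cliqueEdges]
    intro x hx
    rcases Sym2.mem_iff.1 hx with rfl | rfl <;> assumption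

lemma disj_star_clique {n : ℕ} {S : Finset (Fin n)} {w : Fin n} (hw : w ∉ S) :
    Disjoint (starEdges n S w) (cliqueEdges n S) := by
  rw [Finset.disjoint_left]
  intro e he hc
  rw [mem_starEdges] at he
  rw [mem_cliqueEdges] at hc
  obtain ⟨u, hu, heq⟩ := he
  exact hw (hc w (by rw [heq]; simp))

lemma disj_star_star {n : ℕ} {S : Finset (Fin n)} {w w' : Fin n} (hw : w ∉ S) (hw' : w' ∉ S)
    (hne : w ≠ w') : Disjoint (starEdges n S w) (starEdges n S w') := by
  rw [Finset.disjoint_left]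
  intro e he he'
  rw [mem_starEdges] at he he'
  obtain ⟨u, hu, heq⟩ := he
  obtain ⟨u', hu', heq'⟩ := he'
  have h2 : (s(w, u) : Sym2 (Fin n)) = s(w', u') := heq ▸ heq'
  rw [Sym2.eq_iff] at h2
  rcases h2 with ⟨h1, -⟩ | ⟨h1, h2⟩
  · exact hne h1
  · exact hw (h1 ▸ hu')

lemma Pr_eq_mass (n : ℕ) (p : ℝ) (A : EdgeSet n → Prop) :
    Pr n p A = mass p (Finset.univ : Finset (PotEdge n)) A := by
  unfold Pr mass edgeWeight
  rw [Finset.sum_filter, Finset.powerset_univ]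
  simp [Finset.card_univ]

lemma Pr_isMaxClique (n : ℕ) (p : ℝ) (S : Finset (Fin n)) :
    Pr n p (fun E => IsMaxClique E S)
      = p ^ Nat.choose S.card 2 * (1 - p ^ S.card) ^ (n - S.card) := by
  rw [Pr_eq_mass]
  set F := cliqueEdges n S with hF
  have hinter : ∀ (E : EdgeSet n), ∀ w ∉ S,
      E ∩ ((Finset.univ : Finset (PotEdge n)) \ F) ∩ starEdges n S w = E ∩ starEdges n S w := by
    intro E w hw
    ext a
    simp only [Finset.mem_inter, Finset.mem_sdiff, Finset.mem_univ, true_and]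
    constructor
    · tauto
    · rintro ⟨ha, hb⟩
      exact ⟨⟨ha, fun hc => Finset.disjoint_left.1 (disj_star_clique hw) hb hc⟩, hb⟩
  have step1 : mass p (Finset.univ : Finset (PotEdge n)) (fun E => IsMaxClique E S) =
      mass p Finset.univ (fun E => (fun s => s = F) (E ∩ F) ∧
        (fun t => ∀ w ∈ Sᶜ, ¬ (t ∩ starEdges n S w = starEdges n S w))
          (E ∩ (Finset.univ \ F))) := by
    apply mass_congr
    intro E _
    unfold IsMaxClique
    rw [isClique_iff]
    simp only [Finset.mem_compl]
    constructor
    · rintro ⟨h1, h2⟩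
      refine ⟨Finset.inter_eq_right.2 h1, fun w hw => ?_⟩
      rw [hinter E w hw, Finset.inter_eq_right]
      rw [← neighbor_iff hw]
      intro hall
      exact h2 ⟨w, hw, hall⟩
    · rintro ⟨h1, h2⟩
      refine ⟨Finset.inter_eq_right.1 h1, ?_⟩
      rintro ⟨w, hw, hall⟩
      apply h2 w hw
      rw [hinter E w hw, Finset.inter_eq_right]
      exact (neighbor_iff hw).1 hall
  rw [step1, mass_split p (Finset.subset_univ F) (fun s => s = F)
    (fun t => ∀ w ∈ Sᶜ, ¬ (t ∩ starEdges n S w = starEdges n S w)), mass_full]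
  have step2 : mass p (Finset.univ \ F)
      (fun t => ∀ w ∈ Sᶜ, ¬ (t ∩ starEdges n S w = starEdges n S w))
      = ∏ w ∈ Sᶜ, mass p (starEdges n S w)
          (fun s => ¬ (s ∩ starEdges n S w = starEdges n S w)) := by
    apply mass_prod p (fun w => starEdges n S w)
      (fun w s => ¬ (s = starEdges n S w)) Sᶜ
    · intro w hw
      rw [Finset.subset_sdiff]
      exact ⟨Finset.subset_univ _, disj_star_clique (Finset.mem_compl.1 hw)⟩
    · intro w hw w' hw' hne
      exact disj_star_star (Finset.mem_compl.1 hw) (Finset.mem_compl.1 hw') hne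
  rw [step2]
  have step3 : ∀ w ∈ Sᶜ, mass p (starEdges n S w)
      (fun s => ¬ (s ∩ starEdges n S w = starEdges n S w)) = 1 - p ^ S.card := by
    intro w hw
    rw [mass_congr p _ (Q := fun s => s ≠ starEdges n S w)
      (fun s hs => by rw [Finset.inter_eq_left.2 hs])]
    rw [mass_ne, card_starEdges (Finset.mem_compl.1 hw)]
  rw [Finset.prod_congr rfl step3, Finset.prod_const, Finset.card_compl, Fintype.card_fin,
    card_cliqueEdges]

lemma sum_biUnion_le_real {α β : Type*} [DecidableEq β] (f : β → ℝ) (hf : ∀ b, 0 ≤ f b)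
    (s : Finset α) (t : α → Finset β) :
    ∑ b ∈ s.biUnion t, f b ≤ ∑ a ∈ s, ∑ b ∈ t a, f b := by
  classical
  induction s using Finset.induction_on with
  | empty => simp
  | @insert a s hna ih =>
    rw [Finset.biUnion_insert, Finset.sum_insert hna]
    have h1 := Finset.sum_union_inter (s₁ := t a) (s₂ := s.biUnion t) (f := f)
    have h2 : (0:ℝ) ≤ ∑ b ∈ (t a ∩ s.biUnion t), f b := Finset.sum_nonneg fun b _ => hf b
    have h3 : ∑ b ∈ (t a ∪ s.biUnion t), f b ≤ ∑ b ∈ t a, f b + ∑ b ∈ s.biUnion t, f b := by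
      linarith
    exact h3.trans (by linarith [ih])

lemma Pr_union_bound (n : ℕ) (p : ℝ) (hp0 : 0 ≤ p) (hp1 : p ≤ 1)
    (𝒮 : Finset (Finset (Fin n))) (A : Finset (Fin n) → EdgeSet n → Prop) :
    Pr n p (fun E => ∃ S ∈ 𝒮, A S E) ≤ ∑ S ∈ 𝒮, Pr n p (A S) := by
  rw [Pr_eq_mass, Finset.sum_congr rfl (fun S (_ : S ∈ 𝒮) => Pr_eq_mass n p (A S))]
  unfold mass
  set w : EdgeSet n → ℝ :=
    fun E => p ^ E.card * (1 - p) ^ ((Finset.univ : Finset (PotEdge n)).card - E.card) with hwdef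
  have hw : ∀ E : EdgeSet n, 0 ≤ w E :=
    fun E => mul_nonneg (pow_nonneg hp0 _) (pow_nonneg (by linarith) _)
  have hnn : ∀ (S : Finset (Fin n)) (E : EdgeSet n), 0 ≤ (if A S E then w E else 0) := by
    intro S E; split_ifs; exacts [hw E, le_rfl]
  refine le_of_le_of_eq (Finset.sum_le_sum (fun E (_ : E ∈ Finset.univ.powerset) => ?_))
    Finset.sum_comm
  by_cases h : ∃ S ∈ 𝒮, A S E
  · rw [if_pos h]
    obtain ⟨S₀, hS₀, hA⟩ := h
    have h2 := Finset.single_le_sum (f := fun S => if A S E then w E else 0)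
      (fun S _ => hnn S E) hS₀
    rw [if_pos hA] at h2
    exact h2
  · rw [if_neg h]
    exact Finset.sum_nonneg fun S _ => hnn S E

lemma Pr_congr {n : ℕ} {p : ℝ} {A B : EdgeSet n → Prop} (h : ∀ E, A E ↔ B E) :
    Pr n p A = Pr n p B := by
  rw [Pr_eq_mass, Pr_eq_mass]
  exact mass_congr _ _ (fun s _ => h s)

lemma Pr_bound (n k : ℕ) (p : ℝ) (hp0 : 0 ≤ p) (hp1 : p ≤ 1) :
    Pr n p (fun E => ∃ S : Finset (Fin n), S.card = k + 1 ∧ IsMaxClique E S)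
      ≤ (n : ℝ) ^ (k + 1) * p ^ Nat.choose (k + 1) 2 * (1 - p ^ (k + 1)) ^ (n - (k + 1)) := by
  have h1 : Pr n p (fun E => ∃ S : Finset (Fin n), S.card = k + 1 ∧ IsMaxClique E S)
      = Pr n p (fun E => ∃ S ∈ Finset.powersetCard (k + 1) (Finset.univ : Finset (Fin n)),
          IsMaxClique E S) := by
    apply Pr_congr
    intro E
    constructor
    · rintro ⟨S, hc, hm⟩
      exact ⟨S, Finset.mem_powersetCard_univ.2 hc, hm⟩
    · rintro ⟨S, hc, hm⟩
      exact ⟨S, Finset.mem_powersetCard_univ.1 hc, hm⟩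
  rw [h1]
  refine le_trans (Pr_union_bound n p hp0 hp1 _ (fun S E => IsMaxClique E S)) ?_
  have h2 : ∀ S ∈ Finset.powersetCard (k + 1) (Finset.univ : Finset (Fin n)),
      Pr n p (fun E => IsMaxClique E S)
        = p ^ Nat.choose (k + 1) 2 * (1 - p ^ (k + 1)) ^ (n - (k + 1)) := by
    intro S hS
    rw [Pr_isMaxClique, Finset.mem_powersetCard_univ.1 hS]
  rw [Finset.sum_congr rfl h2, Finset.sum_const, Finset.card_powersetCard,
    Finset.card_univ, Fintype.card_fin, nsmul_eq_mul]
  have h3 : ((Nat.choose n (k + 1) : ℕ) : ℝ) ≤ (n : ℝ) ^ (k + 1) := by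
    rw [show ((n : ℝ) ^ (k + 1)) = ((n ^ (k + 1) : ℕ) : ℝ) by push_cast; ring]
    exact_mod_cast Nat.choose_le_pow n (k + 1)
  have h4 : 0 ≤ p ^ Nat.choose (k + 1) 2 * (1 - p ^ (k + 1)) ^ (n - (k + 1)) := by
    apply mul_nonneg (pow_nonneg hp0 _)
    apply pow_nonneg
    have := pow_le_one₀ hp0 hp1 (n := k + 1)
    linarith
  rw [mul_assoc]
  exact mul_le_mul_of_nonneg_right h3 h4

set_option maxHeartbeats 2000000 in
lemma keybound (k n : ℕ) (w p : ℝ) (hk : 1 ≤ k) (hp0 : 0 ≤ p) (hp1 : p ≤ 1)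
    (hw1 : 1 ≤ w) (hw4 : 4 * (k : ℝ) ^ 2 ≤ w)
    (hL : (k : ℝ) ≤ Real.log n) (hL2 : 2 ≤ Real.log n)
    (hLL : 1 ≤ Real.log (Real.log n))
    (hn : 2 * (k + 1) ≤ n)
    (hple : ((((k : ℝ) / 2 + 1) * Real.log n + ((k : ℝ) / 2) * Real.log (Real.log n) + w) / n)
        ^ ((1 : ℝ) / (k + 1)) ≤ p) :
    (n : ℝ) ^ (k + 1) * p ^ Nat.choose (k + 1) 2 * (1 - p ^ (k + 1)) ^ (n - (k + 1))
      ≤ Real.exp ((k : ℝ) / 2 * Real.log ((k : ℝ) + 2) + ((k : ℝ) + 1) - w / 2) := by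
  have hK1 : 1 ≤ (k : ℝ) := by exact_mod_cast hk
  have hK0 : 0 ≤ (k : ℝ) := by linarith
  set L : ℝ := Real.log n with hLdef
  set LL : ℝ := Real.log L with hLLdef
  set T : ℝ := ((k : ℝ) / 2 + 1) * L + ((k : ℝ) / 2) * LL + w with hT
  have hnR : (4 : ℝ) ≤ (n : ℝ) := by
    have h4 : (4 : ℕ) ≤ n := by omega
    exact_mod_cast h4
  have npos : (0 : ℝ) < n := by linarith
  have hTpos : (0 : ℝ) < T := by
    have t1 : (0:ℝ) ≤ ((k : ℝ) / 2 + 1) * L := mul_nonneg (by linarith) (by linarith)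
    have t2 : (0:ℝ) ≤ ((k : ℝ) / 2) * LL := mul_nonneg (by linarith) (by linarith)
    rw [hT]; linarith
  set a : ℝ := T / (n : ℝ) with ha_def
  have hapos : 0 < a := div_pos hTpos npos
  set q : ℝ := p ^ (k + 1) with hq
  clear_value L LL T a q
  have hkne : ((k : ℝ) + 1) ≠ 0 := by positivity
  have haq : a ≤ q := by
    have h0 : (a ^ ((1 : ℝ) / ((k : ℝ) + 1))) ^ (k + 1) = a := by
      rw [← Real.rpow_natCast (a ^ ((1 : ℝ) / ((k : ℝ) + 1))) (k + 1),
        ← Real.rpow_mul hapos.le]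
      have hc2 : (1 : ℝ) / ((k : ℝ) + 1) * (((k + 1 : ℕ)) : ℝ) = 1 := by
        push_cast
        field_simp
      rw [hc2, Real.rpow_one]
    calc a = (a ^ ((1 : ℝ) / ((k : ℝ) + 1))) ^ (k + 1) := h0.symm
      _ ≤ p ^ (k + 1) := pow_le_pow_left₀ (Real.rpow_nonneg hapos.le _) hple _
      _ = q := hq.symm
  have hppos : 0 < p := lt_of_lt_of_le (Real.rpow_pos_of_pos hapos _) hple
  have hqpos : 0 < q := by rw [hq]; exact pow_pos hppos _
  have hq1 : q ≤ 1 := by rw [hq]; exact pow_le_one₀ hp0 hp1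
  have ha1 : a ≤ 1 := haq.trans hq1
  have hkn : k + 1 ≤ n := by omega
  have hM : ((n - (k + 1) : ℕ) : ℝ) = (n : ℝ) - ((k : ℝ) + 1) := by
    push_cast [Nat.cast_sub hkn]
    ring
  set M : ℝ := ((n - (k + 1) : ℕ) : ℝ) with hMdef
  clear_value M
  have hMhalf : (n : ℝ) / 2 ≤ M := by
    rw [hM]
    have h2n : (2 : ℝ) * ((k : ℝ) + 1) ≤ n := by exact_mod_cast hn
    linarith
  have hMpos : 0 < M := by linarith
  have hstepB : (1 - q) ^ (n - (k + 1)) ≤ Real.exp (-(q * M)) := by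
    have e1 : 1 - q ≤ Real.exp (-q) := by linarith [Real.add_one_le_exp (-q)]
    have e2 : (1 - q) ^ (n - (k + 1)) ≤ Real.exp (-q) ^ (n - (k + 1)) :=
      pow_le_pow_left₀ (by linarith) e1 _
    rw [← Real.exp_nat_mul] at e2
    refine e2.trans (le_of_eq ?_)
    rw [← hMdef]
    ring_nf
  have hc : ((Nat.choose (k + 1) 2 : ℕ) : ℝ) = ((k : ℝ) + 1) * ((k : ℝ) / 2) := by
    rw [Nat.choose_two_right]
    have hdvd : 2 ∣ (k + 1) * (k + 1 - 1) := by
      rcases Nat.even_or_odd k with he | ho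
      · exact Dvd.dvd.mul_left he.two_dvd _
      · have he1 : Even (k + 1) := Odd.add_one ho
        exact Dvd.dvd.mul_right he1.two_dvd _
    rw [Nat.cast_div hdvd (by norm_num)]
    push_cast [Nat.cast_sub (by omega : 1 ≤ k + 1)]
    ring
  have hstepA : p ^ Nat.choose (k + 1) 2 = q ^ ((k : ℝ) / 2) := by
    rw [hq, ← Real.rpow_natCast p (k + 1), ← Real.rpow_mul hp0,
      ← Real.rpow_natCast p (Nat.choose (k + 1) 2)]
    congr 1
    rw [hc]
    push_cast
    ring
  have hstepC1 : (n : ℝ) ^ (k + 1) = Real.exp (((k : ℝ) + 1) * L) := by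
    rw [← Real.exp_log (pow_pos npos (k + 1)), Real.log_pow]
    congr 1
    rw [← hLdef]
    push_cast
    ring
  have hstepC2 : q ^ ((k : ℝ) / 2 : ℝ) = Real.exp (Real.log q * ((k : ℝ) / 2)) :=
    Real.rpow_def_of_pos hqpos _
  have hassem : (n : ℝ) ^ (k + 1) * p ^ Nat.choose (k + 1) 2 * (1 - q) ^ (n - (k + 1))
      ≤ Real.exp (((k : ℝ) + 1) * L + Real.log q * ((k : ℝ) / 2) + (-(q * M))) := by
    rw [hstepA, hstepC1, hstepC2, Real.exp_add, Real.exp_add]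
    apply mul_le_mul_of_nonneg_left hstepB
    positivity
  refine hassem.trans ?_
  rw [Real.exp_le_exp]
  have hLpos : 0 < L := by linarith
  have hLLnn : 0 ≤ LL := by linarith
  have hkM : (k : ℝ) / 2 ≤ a * M := by
    have h1 : ((k : ℝ) / 2 + 1) * L ≤ T := by
      have t2 : (0:ℝ) ≤ ((k : ℝ) / 2) * LL := mul_nonneg (by linarith) (by linarith)
      rw [hT]; linarith
    have h2 : a * ((n : ℝ) / 2) = T / 2 := by
      rw [ha_def, div_mul_div_comm, mul_comm T ((n : ℝ)), mul_div_mul_left _ _ npos.ne']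
    have h3 : a * ((n : ℝ) / 2) ≤ a * M := mul_le_mul_of_nonneg_left hMhalf hapos.le
    have h4 : 0 ≤ (k : ℝ) / 2 * L := mul_nonneg (by linarith) (by linarith)
    linarith [h1, h2, h3, h4]
  have hstepD : Real.log q * ((k : ℝ) / 2) - q * M ≤ Real.log a * ((k : ℝ) / 2) - a * M := by
    have hlq : Real.log q - Real.log a ≤ q / a - 1 := by
      have h := Real.log_le_sub_one_of_pos (div_pos hqpos hapos)
      rwa [Real.log_div hqpos.ne' hapos.ne'] at h
    have hda : q / a - 1 = (q - a) / a := by rw [sub_div, div_self hapos.ne']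
    have s1 : ((k : ℝ) / 2) * (Real.log q - Real.log a) ≤ ((k : ℝ) / 2) * ((q - a) / a) := by
      apply mul_le_mul_of_nonneg_left _ (by linarith)
      linarith [hda ▸ hlq]
    have s2 : ((k : ℝ) / 2) * ((q - a) / a) ≤ M * (q - a) := by
      rw [mul_div_assoc', div_le_iff₀ hapos]
      calc (k : ℝ) / 2 * (q - a) ≤ (a * M) * (q - a) :=
            mul_le_mul_of_nonneg_right hkM (by linarith)
        _ = M * (q - a) * a := by ring
    linarith [s1.trans s2]
  have haM : T - ((k : ℝ) + 1) ≤ a * M := by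
    have h1 : a * (n : ℝ) = T := by
      rw [ha_def]; exact div_mul_cancel₀ T npos.ne'
    have h2 : a * M = T - a * ((k : ℝ) + 1) := by
      rw [hM]; linear_combination h1
    have h3 : a * ((k : ℝ) + 1) ≤ 1 * ((k : ℝ) + 1) :=
      mul_le_mul_of_nonneg_right ha1 (by linarith)
    linarith [h2, h3]
  have hloga : Real.log a = Real.log T - L := by
    rw [ha_def, Real.log_div hTpos.ne' npos.ne', ← hLdef]
  have hE : ((k : ℝ) + 1) * L + Real.log a * ((k : ℝ) / 2) - a * M
      ≤ ((k : ℝ) / 2) * Real.log T - ((k : ℝ) / 2) * LL - w + ((k : ℝ) + 1) := by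
    rw [hloga]
    have hTexp : T = ((k : ℝ) / 2 + 1) * L + ((k : ℝ) / 2) * LL + w := hT
    linarith [haM, hTexp]
  have hcases : ((k : ℝ) / 2) * Real.log T - ((k : ℝ) / 2) * LL - w + ((k : ℝ) + 1)
      ≤ (k : ℝ) / 2 * Real.log ((k : ℝ) + 2) + ((k : ℝ) + 1) - w / 2 := by
    have hK2pos : (0 : ℝ) < (k : ℝ) + 2 := by linarith
    have hLLL : LL ≤ L := by
      rw [hLLdef]
      calc Real.log L ≤ L - 1 := Real.log_le_sub_one_of_pos hLpos
        _ ≤ L := by linarith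
    rcases le_or_gt w L with hwL | hLw
    · have hTle : T ≤ ((k : ℝ) + 2) * L := by
        have t : (k : ℝ) / 2 * LL ≤ (k : ℝ) / 2 * L := mul_le_mul_of_nonneg_left hLLL (by linarith)
        rw [hT]; linarith
      have hlogT : Real.log T ≤ Real.log ((k : ℝ) + 2) + LL := by
        calc Real.log T ≤ Real.log (((k : ℝ) + 2) * L) := Real.log_le_log hTpos hTle
          _ = Real.log ((k : ℝ) + 2) + LL := by
              rw [Real.log_mul hK2pos.ne' hLpos.ne', ← hLLdef]
      have t3 : (k : ℝ) / 2 * Real.log T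
          ≤ (k : ℝ) / 2 * (Real.log ((k : ℝ) + 2) + LL) :=
        mul_le_mul_of_nonneg_left hlogT (by linarith)
      rw [mul_add] at t3
      linarith
    · have hLLw : LL ≤ w := by linarith
      have hTle : T ≤ ((k : ℝ) + 2) * w := by
        have t1 : ((k : ℝ) / 2 + 1) * L ≤ ((k : ℝ) / 2 + 1) * w :=
          mul_le_mul_of_nonneg_left hLw.le (by linarith)
        have t2 : (k : ℝ) / 2 * LL ≤ (k : ℝ) / 2 * w := mul_le_mul_of_nonneg_left hLLw (by linarith)
        rw [hT]; linarith
      have hw0 : (0 : ℝ) < w := by linarith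
      have hlogT : Real.log T ≤ Real.log ((k : ℝ) + 2) + Real.log w := by
        calc Real.log T ≤ Real.log (((k : ℝ) + 2) * w) := Real.log_le_log hTpos hTle
          _ = Real.log ((k : ℝ) + 2) + Real.log w := Real.log_mul hK2pos.ne' hw0.ne'
      have hsq : Real.log w ≤ 2 * Real.sqrt w := by
        have h1 : Real.sqrt w ^ 2 = w := Real.sq_sqrt hw0.le
        have h2 : 0 < Real.sqrt w := Real.sqrt_pos.2 hw0
        calc Real.log w = Real.log (Real.sqrt w ^ 2) := by rw [h1]
          _ = 2 * Real.log (Real.sqrt w) := by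
              rw [Real.log_pow]; push_cast; ring
          _ ≤ 2 * (Real.sqrt w - 1) := by
              linarith [Real.log_le_sub_one_of_pos h2]
          _ ≤ 2 * Real.sqrt w := by linarith
      have hsqw : 2 * (k : ℝ) ≤ Real.sqrt w := by
        have h1 : (2 * (k : ℝ)) ^ 2 ≤ w := by
          calc (2 * (k : ℝ)) ^ 2 = 4 * (k : ℝ) ^ 2 := by ring
            _ ≤ w := hw4
        have h2 := Real.sqrt_le_sqrt h1
        rwa [Real.sqrt_sq (by linarith : (0:ℝ) ≤ 2 * (k : ℝ))] at h2
      have hlogww : ((k : ℝ) / 2) * Real.log w ≤ w / 2 := by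
        have h1 : ((k : ℝ) / 2) * Real.log w ≤ ((k : ℝ) / 2) * (2 * Real.sqrt w) :=
          mul_le_mul_of_nonneg_left hsq (by linarith)
        have h3 : Real.sqrt w * Real.sqrt w = w := Real.mul_self_sqrt hw0.le
        have h4 : 0 ≤ (Real.sqrt w - 2 * (k : ℝ)) * Real.sqrt w :=
          mul_nonneg (by linarith) (Real.sqrt_nonneg w)
        linarith [h1, h3, h4]
      have hLL0 : 0 ≤ ((k : ℝ) / 2) * LL := mul_nonneg (by linarith) hLLnn
      have t3 : (k : ℝ) / 2 * Real.log T
          ≤ (k : ℝ) / 2 * (Real.log ((k : ℝ) + 2) + Real.log w) :=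
        mul_le_mul_of_nonneg_left hlogT (by linarith)
      rw [mul_add] at t3
      linarith
  linarith [hstepD, hE, hcases]

lemma Pr_nonneg (n : ℕ) (p : ℝ) (hp0 : 0 ≤ p) (hp1 : p ≤ 1) (A : EdgeSet n → Prop) :
    0 ≤ Pr n p A := by
  unfold Pr
  apply Finset.sum_nonneg
  intro E _
  exact mul_nonneg (pow_nonneg hp0 _) (pow_nonneg (by linarith) _)

theorem stmt3' (k : ℕ) (hk : 1 ≤ k) (p ω : ℕ → ℝ)
    (hω : Tendsto ω atTop atTop)
    (hp0 : ∀ n, 0 ≤ p n) (hp1 : ∀ n, p n ≤ 1)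
    (hp : ∀ n : ℕ,
      ((((k : ℝ) / 2 + 1) * Real.log n + ((k : ℝ) / 2) * Real.log (Real.log n) + ω n) / n)
          ^ ((1 : ℝ) / (k + 1)) ≤ p n) :
    Tendsto (fun n : ℕ =>
        Pr n (p n) (fun E => ∃ S : Finset (Fin n), S.card = k + 1 ∧ IsMaxClique E S))
      atTop (𝓝 0) := by
  set C : ℝ := (k : ℝ) / 2 * Real.log ((k : ℝ) + 2) + ((k : ℝ) + 1) with hC
  have hexp : Tendsto (fun n : ℕ => Real.exp (C - ω n / 2)) atTop (𝓝 0) := by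
    apply Real.tendsto_exp_atBot.comp
    have h1 : Tendsto (fun n : ℕ => ω n / 2) atTop atTop :=
      hω.atTop_div_const (by norm_num)
    have h2 : Tendsto (fun n : ℕ => -(ω n / 2)) atTop atBot := tendsto_neg_atBot_iff.2 h1
    have h3 := tendsto_atBot_add_const_left atTop C h2
    simpa [sub_eq_add_neg] using h3
  have hlogn : Tendsto (fun n : ℕ => Real.log n) atTop atTop :=
    Real.tendsto_log_atTop.comp tendsto_natCast_atTop_atTop
  have hloglogn : Tendsto (fun n : ℕ => Real.log (Real.log n)) atTop atTop :=
    Real.tendsto_log_atTop.comp hlogn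
  have hev : ∀ᶠ n : ℕ in atTop,
      Pr n (p n) (fun E => ∃ S : Finset (Fin n), S.card = k + 1 ∧ IsMaxClique E S)
        ≤ Real.exp (C - ω n / 2) := by
    filter_upwards [hω.eventually_ge_atTop 1, hω.eventually_ge_atTop (4 * (k : ℝ) ^ 2),
      hlogn.eventually_ge_atTop ((k : ℝ)), hlogn.eventually_ge_atTop 2,
      hloglogn.eventually_ge_atTop 1, eventually_ge_atTop (2 * (k + 1))]
        with n hw1 hw4 hL hL2 hLL hn
    calc Pr n (p n) (fun E => ∃ S : Finset (Fin n), S.card = k + 1 ∧ IsMaxClique E S)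
        ≤ (n : ℝ) ^ (k + 1) * p n ^ Nat.choose (k + 1) 2 * (1 - p n ^ (k + 1)) ^ (n - (k + 1)) :=
          Pr_bound n k (p n) (hp0 n) (hp1 n)
      _ ≤ Real.exp (C - ω n / 2) := by
          rw [hC]
          exact keybound k n (ω n) (p n) hk (hp0 n) (hp1 n) hw1 hw4 hL hL2 hLL hn (hp n)
  exact tendsto_of_tendsto_of_tendsto_of_le_of_le' tendsto_const_nhds hexp
    (Filter.Eventually.of_forall fun n => Pr_nonneg n (p n) (hp0 n) (hp1 n) _) hev

/-- If `p ≥ (((k/2+1) log n + (k/2) log log n + ω(n))/n)^(1/(k+1))` with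
`ω(n) → ∞`, then w.h.p. `G(n,p)` has no maximal `(k+1)`-clique. -/
theorem stmt3 (k : ℕ) (hk : 1 ≤ k) (p ω : ℕ → ℝ)
    (hω : Tendsto ω atTop atTop)
    (hp0 : ∀ n, 0 ≤ p n) (hp1 : ∀ n, p n ≤ 1)
    (hp : ∀ n : ℕ,
      ((((k : ℝ) / 2 + 1) * Real.log n + ((k : ℝ) / 2) * Real.log (Real.log n) + ω n) / n)
          ^ ((1 : ℝ) / (k + 1)) ≤ p n) :
    Tendsto (fun n : ℕ =>
        Pr n (p n) (fun E => ∃ S : Finset (Fin n), S.card = k + 1 ∧ IsMaxClique E S))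
      atTop (𝓝 0) := by
  exact stmt3' k hk p ω hω hp0 hp1 hp
end
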